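/- Let d ≥ 2 be an integer, d′ = d/(d−1), A a d-fold array of real numbers indexed by {1,…,n}^d, and let ξ = (ξ_1, …, ξ_n) be a random vector with ‖ξ‖_{E_d} < ∞. Let C > 0 be a constant such that for every centered random variable η with ‖η‖_{ψ_1} < ∞ and every t with |t| ≤ 1/(C‖η‖_{ψ_1}), E exp(tη) ≤ exp(C² ‖η‖_{ψ_1}² t²). Then for every t ≥ 0, P(|S_d(ξ) − E S_d(ξ)| ≥ t) ≤ 2 e^{−g(t)}, where g(t) = t² / (16 C² ‖A‖_{d′}² ‖ξ‖_{E_d}^{2d}) if 0 ≤ t ≤ 4C ‖A‖_{d′} ‖ξ‖_{E_d}^d, and g(t) = t / (2C ‖A‖_{d′} ‖ξ‖_{E_d}^d) − 1 if t > 4C ‖A‖_{d′} ‖ξ‖_{E_d}^d. -/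

import Mathlib

open MeasureTheory ENNReal

universe u

/-- The Luxemburg (ψ_1) norm of a real random variable:
`‖η‖_{ψ_1} = inf{K > 0 : E exp(|η/K|) ≤ 2}` (with value `∞` if no such `K` exists). -/
noncomputable def psi1Norm {Ω : Type*} [MeasurableSpace Ω] (μ : Measure Ω)
    (η : Ω → ℝ) : ℝ≥0∞ :=
  ⨅ (K : ℝ) (_ : 0 < K)
    (_ : ∫⁻ ω, ENNReal.ofReal (Real.exp (|η ω / K|)) ∂μ ≤ 2), ENNReal.ofReal K

/-- `‖ξ‖_{E_p} = inf{K > 0 : E exp(∑_i |ξ_i|^p / K^p) ≤ 2}`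
(with value `∞` if no such `K` exists). -/
noncomputable def epNorm {Ω : Type*} [MeasurableSpace Ω] {n : ℕ} (μ : Measure Ω) (p : ℝ)
    (ξ : Fin n → Ω → ℝ) : ℝ≥0∞ :=
  ⨅ (K : ℝ) (_ : 0 < K)
    (_ : ∫⁻ ω, ENNReal.ofReal (Real.exp ((∑ i, |ξ i ω| ^ p) / K ^ p)) ∂μ ≤ 2),
    ENNReal.ofReal K

/-- `S_d(x) = ∑_{i₁,…,i_d} a_{i₁,…,i_d} x_{i₁} ⋯ x_{i_d}`. -/
noncomputable def chaos {d n : ℕ} (A : (Fin d → Fin n) → ℝ) (x : Fin n → ℝ) : ℝ :=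
  ∑ i : Fin d → Fin n, A i * ∏ k, x (i k)

/-- `‖A‖_{d'} = (∑ |a_{i₁,…,i_d}|^{d'})^{1/d'}` with `d' = d/(d-1)`. -/
noncomputable def arrayNorm {d n : ℕ} (A : (Fin d → Fin n) → ℝ) : ℝ :=
  (∑ i : Fin d → Fin n, |A i| ^ ((d : ℝ) / ((d : ℝ) - 1))) ^ (((d : ℝ) - 1) / (d : ℝ))

section AuxLemmas
set_option linter.unusedSectionVars false
set_option linter.unusedVariables false
set_option maxHeartbeats 1000000
open Finset

lemma arrayNorm_nonneg {d n : ℕ} (A : (Fin d → Fin n) → ℝ) : 0 ≤ arrayNorm A :=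
  Real.rpow_nonneg (Finset.sum_nonneg fun _ _ => Real.rpow_nonneg (abs_nonneg _) _) _

lemma chaos_abs_le {d n : ℕ} (hd : 2 ≤ d) (A : (Fin d → Fin n) → ℝ) (x : Fin n → ℝ) :
    |chaos A x| ≤ arrayNorm A * ∑ j, |x j| ^ (d : ℝ) := by
  have hd1 : (1:ℝ) < (d:ℝ) := by
    have : 1 < d := by omega
    exact_mod_cast this
  have hdpos : (0:ℝ) < (d:ℝ) := lt_trans one_pos hd1
  have hpq : Real.HolderConjugate ((d:ℝ)/((d:ℝ)-1)) (d:ℝ) := by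
    exact ((Real.holderConjugate_iff_eq_conjExponent hd1).mpr rfl).symm
  set T := ∑ j, |x j| ^ (d:ℝ) with hT
  have hTnn : 0 ≤ T := Finset.sum_nonneg fun j _ => Real.rpow_nonneg (abs_nonneg _) _
  have h1 : |chaos A x| ≤ ∑ i : Fin d → Fin n, |A i| * ∏ k, |x (i k)| := by
    refine (Finset.abs_sum_le_sum_abs _ _).trans (le_of_eq ?_)
    refine Finset.sum_congr rfl fun i _ => ?_
    rw [abs_mul, Finset.abs_prod]
  have h2 : ∑ i : Fin d → Fin n, |A i| * ∏ k, |x (i k)| ≤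
      (∑ i : Fin d → Fin n, |A i| ^ ((d:ℝ)/((d:ℝ)-1))) ^ (1/((d:ℝ)/((d:ℝ)-1))) *
      (∑ i : Fin d → Fin n, (∏ k, |x (i k)|) ^ (d:ℝ)) ^ (1/(d:ℝ)) :=
    Real.inner_le_Lp_mul_Lq_of_nonneg _ hpq (fun i _ => abs_nonneg _)
      (fun i _ => Finset.prod_nonneg fun k _ => abs_nonneg _)
  have h3 : ∑ i : Fin d → Fin n, (∏ k, |x (i k)|) ^ (d:ℝ) = T ^ d := by
    have heq : ∀ i : Fin d → Fin n, (∏ k, |x (i k)|) ^ (d:ℝ) = ∏ k, |x (i k)| ^ (d:ℝ) := by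
      intro i
      rw [← Real.finset_prod_rpow _ _ (fun k _ => abs_nonneg _)]
    simp_rw [heq]
    rw [hT, Finset.sum_pow' Finset.univ (fun j => |x j| ^ (d:ℝ)) d]
    exact Finset.sum_congr Fintype.piFinset_univ.symm fun _ _ => rfl
  have h4 : (T ^ d : ℝ) ^ (1/(d:ℝ)) = T := by
    rw [← Real.rpow_natCast T d, ← Real.rpow_mul hTnn]
    rw [mul_one_div, div_self (ne_of_gt hdpos), Real.rpow_one]
  have h5 : (1:ℝ)/((d:ℝ)/((d:ℝ)-1)) = ((d:ℝ)-1)/(d:ℝ) := one_div_div _ _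
  calc |chaos A x| ≤ _ := h1
    _ ≤ _ := h2
    _ = arrayNorm A * T := by rw [h3, h4, h5, arrayNorm]


section
variable {Ω : Type*} [MeasurableSpace Ω] {μ : Measure Ω} [IsProbabilityMeasure μ]
variable {n : ℕ} {ξ : Fin n → Ω → ℝ} {p : ℝ}

/-- From `E exp f ≤ 2`, get `E f ≤ 1`. -/
lemma lintegral_le_one_of_exp {f : Ω → ℝ} (hf : ∀ ω, 0 ≤ f ω)
    (h : ∫⁻ ω, ENNReal.ofReal (Real.exp (f ω)) ∂μ ≤ 2) :
    ∫⁻ ω, ENNReal.ofReal (f ω) ∂μ ≤ 1 := by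
  have hpt : ∀ ω, ENNReal.ofReal (f ω) + 1 ≤ ENNReal.ofReal (Real.exp (f ω)) := by
    intro ω
    rw [show (1:ℝ≥0∞) = ENNReal.ofReal 1 by simp, ← ENNReal.ofReal_add (hf ω) zero_le_one]
    exact ENNReal.ofReal_le_ofReal (Real.add_one_le_exp _)
  have h2 : ∫⁻ ω, (ENNReal.ofReal (f ω) + 1) ∂μ ≤ 2 :=
    le_trans (lintegral_mono hpt) h
  rw [lintegral_add_right _ measurable_const, lintegral_one, measure_univ] at h2
  rw [show (2:ℝ≥0∞) = 1 + 1 by norm_num] at h2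
  exact (ENNReal.add_le_add_iff_right one_ne_top).mp h2

lemma exists_feasible_lt {K : ℝ} (hK : 0 ≤ K) (h : epNorm μ p ξ < ENNReal.ofReal K) :
    ∃ K' : ℝ, 0 < K' ∧ K' < K ∧
      ∫⁻ ω, ENNReal.ofReal (Real.exp ((∑ i, |ξ i ω| ^ p) / K' ^ p)) ∂μ ≤ 2 := by
  rw [epNorm] at h
  rw [iInf_lt_iff] at h
  obtain ⟨K', h⟩ := h
  rw [iInf_lt_iff] at h
  obtain ⟨hK', h⟩ := h
  rw [iInf_lt_iff] at h
  obtain ⟨hfeas, h⟩ := h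
  exact ⟨K', hK', by rwa [ENNReal.ofReal_lt_ofReal_iff_of_nonneg (le_of_lt hK')] at h, hfeas⟩

/-- Feasibility is monotone in `K`. -/
lemma feasible_mono {K K' : ℝ} (hp : 0 < p) (hK' : 0 < K') (hKK : K' ≤ K)
    (h : ∫⁻ ω, ENNReal.ofReal (Real.exp ((∑ i, |ξ i ω| ^ p) / K' ^ p)) ∂μ ≤ 2) :
    ∫⁻ ω, ENNReal.ofReal (Real.exp ((∑ i, |ξ i ω| ^ p) / K ^ p)) ∂μ ≤ 2 := by
  refine le_trans (lintegral_mono fun ω => ?_) h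
  have hS : 0 ≤ ∑ i, |ξ i ω| ^ p := Finset.sum_nonneg fun i _ => Real.rpow_nonneg (abs_nonneg _) _
  have h1 : (0:ℝ) < K' ^ p := Real.rpow_pos_of_pos hK' _
  have h2 : K' ^ p ≤ K ^ p := Real.rpow_le_rpow (le_of_lt hK') hKK (le_of_lt hp)
  exact ENNReal.ofReal_le_ofReal (Real.exp_le_exp.mpr (by gcongr))

/-- If `epNorm = 0` then the `ξ i` vanish a.e. -/
lemma epNorm_eq_zero_ae (hmeas : ∀ i, Measurable (ξ i)) (hp : 1 ≤ p)
    (h0 : epNorm μ p ξ = 0) : ∀ᵐ ω ∂μ, ∀ i, ξ i ω = 0 := by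
  have hp0 : 0 < p := lt_of_lt_of_le one_pos hp
  have hSmeas : Measurable fun ω => ∑ i, |ξ i ω| ^ p :=
    Finset.measurable_sum _ fun i _ =>
      (Real.continuous_rpow_const (le_of_lt hp0)).measurable.comp ((hmeas i).abs)
  have hL : ∫⁻ ω, ENNReal.ofReal (∑ i, |ξ i ω| ^ p) ∂μ = 0 := by
    refine le_antisymm ?_ zero_le
    refine ENNReal.le_of_forall_pos_le_add fun ε hε _ => ?_
    rw [zero_add]
    set ε' : ℝ := min (ε : ℝ) 1 with hε'
    have hε'pos : 0 < ε' := lt_min (by exact_mod_cast hε) one_pos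
    have h : epNorm μ p ξ < ENNReal.ofReal ε' := by
      rw [h0]; exact ENNReal.ofReal_pos.mpr hε'pos
    obtain ⟨K, hKpos, hKlt, hfeas⟩ := exists_feasible_lt (le_of_lt hε'pos) h
    have h1 : ∫⁻ ω, ENNReal.ofReal ((∑ i, |ξ i ω| ^ p) / K ^ p) ∂μ ≤ 1 :=
      lintegral_le_one_of_exp (fun ω => div_nonneg
        (Finset.sum_nonneg fun i _ => Real.rpow_nonneg (abs_nonneg _) _)
        (le_of_lt (Real.rpow_pos_of_pos hKpos _))) hfeas
    have hKp : (0:ℝ) < K ^ p := Real.rpow_pos_of_pos hKpos _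
    have h2 : ∫⁻ ω, ENNReal.ofReal (∑ i, |ξ i ω| ^ p) ∂μ ≤ ENNReal.ofReal (K ^ p) := by
      calc ∫⁻ ω, ENNReal.ofReal (∑ i, |ξ i ω| ^ p) ∂μ
          = ∫⁻ ω, ENNReal.ofReal (K ^ p) * ENNReal.ofReal ((∑ i, |ξ i ω| ^ p) / K ^ p) ∂μ := by
            congr 1; funext ω
            rw [← ENNReal.ofReal_mul (le_of_lt hKp), mul_div_cancel₀ _ (ne_of_gt hKp)]
        _ = ENNReal.ofReal (K ^ p) * ∫⁻ ω, ENNReal.ofReal ((∑ i, |ξ i ω| ^ p) / K ^ p) ∂μ :=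
            lintegral_const_mul _ (by exact ENNReal.measurable_ofReal.comp (hSmeas.div_const _))
        _ ≤ ENNReal.ofReal (K ^ p) * 1 := by gcongr
        _ = ENNReal.ofReal (K ^ p) := mul_one _
    refine h2.trans ?_
    have hK1 : K ≤ 1 := le_of_lt (lt_of_lt_of_le hKlt (min_le_right _ _))
    have : K ^ p ≤ K := by
      calc K ^ p ≤ K ^ (1:ℝ) := Real.rpow_le_rpow_of_exponent_ge hKpos hK1 hp
        _ = K := Real.rpow_one K
    calc ENNReal.ofReal (K ^ p) ≤ ENNReal.ofReal (ε' : ℝ) :=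
          ENNReal.ofReal_le_ofReal (le_of_lt (lt_of_le_of_lt this hKlt))
      _ ≤ (ε : ℝ≥0∞) := by
          rw [hε']
          exact le_trans (ENNReal.ofReal_le_ofReal (min_le_left _ _)) (by simp)
  have hS0 : (fun ω => ENNReal.ofReal (∑ i, |ξ i ω| ^ p)) =ᵐ[μ] 0 :=
    (lintegral_eq_zero_iff (show Measurable fun ω => ENNReal.ofReal (∑ i, |ξ i ω| ^ p) from
      ENNReal.measurable_ofReal.comp hSmeas)).mp hL
  filter_upwards [hS0] with ω hω
  intro i
  simp only [Pi.zero_apply] at hω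
  have hS : 0 ≤ ∑ j, |ξ j ω| ^ p := Finset.sum_nonneg fun j _ => Real.rpow_nonneg (abs_nonneg _) _
  have : ∑ j, |ξ j ω| ^ p = 0 := le_antisymm (by rwa [ENNReal.ofReal_eq_zero] at hω) hS
  have hi : |ξ i ω| ^ p = 0 := by
    have := (Finset.sum_eq_zero_iff_of_nonneg
      (fun j _ => Real.rpow_nonneg (abs_nonneg _) p)).mp this i (Finset.mem_univ i)
    exact this
  have := (Real.rpow_eq_zero (abs_nonneg _) (ne_of_gt hp0)).mp hi
  exact abs_eq_zero.mp this

end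

section
variable {Ω : Type*} [MeasurableSpace Ω] {μ : Measure Ω} [IsProbabilityMeasure μ]
variable {n : ℕ} {ξ : Fin n → Ω → ℝ} {p : ℝ}

lemma epNorm_self_feasible (hmeas : ∀ i, Measurable (ξ i)) (hp : 0 < p)
    {τ : ℝ} (hτ : 0 < τ) (hτeq : epNorm μ p ξ = ENNReal.ofReal τ) :
    ∫⁻ ω, ENNReal.ofReal (Real.exp ((∑ i, |ξ i ω| ^ p) / τ ^ p)) ∂μ ≤ 2 := by
  have hSmeas : Measurable fun ω => ∑ i, |ξ i ω| ^ p :=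
    Finset.measurable_sum _ fun i _ =>
      (Real.continuous_rpow_const (le_of_lt hp)).measurable.comp ((hmeas i).abs)
  set S : Ω → ℝ := fun ω => ∑ i, |ξ i ω| ^ p with hS
  have hSnn : ∀ ω, 0 ≤ S ω := fun ω =>
    Finset.sum_nonneg fun i _ => Real.rpow_nonneg (abs_nonneg _) _
  set K : ℕ → ℝ := fun m => τ * (1 + ((m : ℝ) + 1)⁻¹) with hK
  have hKτ : ∀ m, τ < K m := by
    intro m
    have : (0:ℝ) < ((m:ℝ)+1)⁻¹ := by positivity
    calc τ = τ * 1 := (mul_one τ).symm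
      _ < K m := by rw [hK]; exact mul_lt_mul_of_pos_left (by linarith) hτ
  have hKpos : ∀ m, 0 < K m := fun m => lt_trans hτ (hKτ m)
  have hfeasm : ∀ m, ∫⁻ ω, ENNReal.ofReal (Real.exp (S ω / K m ^ p)) ∂μ ≤ 2 := by
    intro m
    have hlt : epNorm μ p ξ < ENNReal.ofReal (K m) := by
      rw [hτeq]
      exact ENNReal.ofReal_lt_ofReal_iff_of_nonneg (le_of_lt hτ) |>.mpr (hKτ m)
    obtain ⟨K', hK'pos, hK'lt, hfeas⟩ := exists_feasible_lt (le_of_lt (hKpos m)) hlt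
    exact feasible_mono hp hK'pos (le_of_lt hK'lt) hfeas
  set f : ℕ → Ω → ℝ≥0∞ := fun m ω => ENNReal.ofReal (Real.exp (S ω / K m ^ p)) with hf
  have hmono : Monotone f := by
    intro m m' hmm ω
    have h1 : K m' ≤ K m := by
      rw [hK]
      have : ((m':ℝ)+1)⁻¹ ≤ ((m:ℝ)+1)⁻¹ := by
        apply inv_anti₀ (by positivity)
        have : (m:ℝ) ≤ (m':ℝ) := by exact_mod_cast hmm
        linarith
      nlinarith [hτ]
    have h2 : (0:ℝ) < K m' ^ p := Real.rpow_pos_of_pos (hKpos m') _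
    have h3 : K m' ^ p ≤ K m ^ p := Real.rpow_le_rpow (le_of_lt (hKpos m')) h1 (le_of_lt hp)
    exact ENNReal.ofReal_le_ofReal (Real.exp_le_exp.mpr (by gcongr))
  have hsup : ∀ ω, (⨆ m, f m ω) = ENNReal.ofReal (Real.exp (S ω / τ ^ p)) := by
    intro ω
    have htendK : Filter.Tendsto K Filter.atTop (nhds τ) := by
      have h1 : Filter.Tendsto (fun m : ℕ => 1 + ((m:ℝ)+1)⁻¹) Filter.atTop (nhds 1) := by
        have := tendsto_one_div_add_atTop_nhds_zero_nat (𝕜 := ℝ)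
        simp only [one_div] at this
        simpa using this.const_add 1
      have := h1.const_mul τ
      simpa [hK] using this
    have hc : ContinuousAt (fun x : ℝ => ENNReal.ofReal (Real.exp (S ω / x ^ p))) τ := by
      apply ENNReal.continuous_ofReal.continuousAt.comp
      apply Real.continuous_exp.continuousAt.comp
      apply ContinuousAt.div continuousAt_const
        (Real.continuousAt_rpow_const τ p (Or.inl (ne_of_gt hτ)))
      exact ne_of_gt (Real.rpow_pos_of_pos hτ _)
    have hlim : Filter.Tendsto (fun m => f m ω) Filter.atTop
        (nhds (ENNReal.ofReal (Real.exp (S ω / τ ^ p)))) := hc.tendsto.comp htendK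
    exact tendsto_nhds_unique (tendsto_atTop_iSup fun m m' h => hmono h ω) hlim
  calc ∫⁻ ω, ENNReal.ofReal (Real.exp (S ω / τ ^ p)) ∂μ
      = ∫⁻ ω, ⨆ m, f m ω ∂μ := by
        congr 1; funext ω; rw [hsup]
    _ = ⨆ m, ∫⁻ ω, f m ω ∂μ :=
        lintegral_iSup (fun m => ((hSmeas.div_const _).exp).ennreal_ofReal) hmono
    _ ≤ 2 := iSup_le hfeasm

end
lemma psi1Norm_le {Ω : Type*} [MeasurableSpace Ω] {μ : Measure Ω} {η : Ω → ℝ} {K : ℝ} (hK : 0 < K)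
    (h : ∫⁻ ω, ENNReal.ofReal (Real.exp (|η ω / K|)) ∂μ ≤ 2) :
    psi1Norm μ η ≤ ENNReal.ofReal K :=
  (iInf_le _ K).trans ((iInf_le _ hK).trans (iInf_le _ h))

section
variable {Ω : Type*} [MeasurableSpace Ω] {μ : Measure Ω} [IsProbabilityMeasure μ]

lemma main_bound {d n : ℕ} (hd : 2 ≤ d) {A : (Fin d → Fin n) → ℝ} {ξ : Fin n → Ω → ℝ}
    (hmeas : ∀ i, Measurable (ξ i))
    {τ : ℝ} (hτ : 0 < τ) (hτeq : epNorm μ (d:ℝ) ξ = ENNReal.ofReal τ)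
    (hA : 0 < arrayNorm A) {C : ℝ} (hC : 0 < C)
    (hMGF : ∀ η : Ω → ℝ, Measurable η → Integrable η μ → (∫ ω, η ω ∂μ) = 0 →
      psi1Norm μ η < ⊤ →
      ∀ s : ℝ, C * (psi1Norm μ η).toReal * |s| ≤ 1 →
        ∫⁻ ω, ENNReal.ofReal (Real.exp (s * η ω)) ∂μ ≤
          ENNReal.ofReal (Real.exp (C ^ 2 * (psi1Norm μ η).toReal ^ 2 * s ^ 2)))
    (t : ℝ) (ht : 0 ≤ t) :
    μ {ω | t ≤ |chaos A (fun i => ξ i ω) - ∫ ω', chaos A (fun i => ξ i ω') ∂μ|} ≤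
      ENNReal.ofReal (2 * Real.exp
        (-(if t ≤ 4 * C * arrayNorm A * τ ^ d then
            t ^ 2 / (16 * C ^ 2 * arrayNorm A ^ 2 * (τ ^ d) ^ 2)
          else
            t / (2 * C * arrayNorm A * τ ^ d) - 1))) := by
  have hdpos : (0:ℝ) < (d:ℝ) := by
    have : 0 < d := by omega
    exact_mod_cast this
  -- basic objects
  set S : Ω → ℝ := fun ω => ∑ i, |ξ i ω| ^ (d:ℝ) with hSdef
  have hSmeas : Measurable S :=
    Finset.measurable_sum _ fun i _ =>
      (Real.continuous_rpow_const (le_of_lt hdpos)).measurable.comp ((hmeas i).abs)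
  have hSnn : ∀ ω, 0 ≤ S ω := fun ω =>
    Finset.sum_nonneg fun i _ => Real.rpow_nonneg (abs_nonneg _) _
  set B : ℝ := τ ^ d with hBdef
  have hB : 0 < B := pow_pos hτ d
  have hBrpow : τ ^ (d:ℝ) = B := Real.rpow_natCast τ d
  set X : Ω → ℝ := fun ω => chaos A (fun i => ξ i ω) with hXdef
  have hXmeas : Measurable X := by
    rw [hXdef]
    unfold chaos
    exact Finset.measurable_sum _ fun i _ =>
      (Finset.measurable_prod _ fun k _ => hmeas (i k)).const_mul (A i)
  have hXbound : ∀ ω, |X ω| ≤ arrayNorm A * S ω := fun ω => chaos_abs_le hd A _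
  set M : ℝ := arrayNorm A * B with hMdef
  have hM : 0 < M := mul_pos hA hB
  -- feasibility at τ
  have hfeas : ∫⁻ ω, ENNReal.ofReal (Real.exp (S ω / B)) ∂μ ≤ 2 := by
    have := epNorm_self_feasible hmeas hdpos hτ hτeq
    rwa [hBrpow] at this
  -- basic integrability
  have hSB1 : ∫⁻ ω, ENNReal.ofReal (S ω / B) ∂μ ≤ 1 :=
    lintegral_le_one_of_exp (fun ω => div_nonneg (hSnn ω) (le_of_lt hB)) hfeas
  have hSlin : ∫⁻ ω, ENNReal.ofReal (S ω) ∂μ ≤ ENNReal.ofReal B := by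
    calc ∫⁻ ω, ENNReal.ofReal (S ω) ∂μ
        = ∫⁻ ω, ENNReal.ofReal B * ENNReal.ofReal (S ω / B) ∂μ := by
          congr 1; funext ω
          rw [← ENNReal.ofReal_mul (le_of_lt hB), mul_div_cancel₀ _ (ne_of_gt hB)]
      _ = ENNReal.ofReal B * ∫⁻ ω, ENNReal.ofReal (S ω / B) ∂μ :=
          lintegral_const_mul _ ((hSmeas.div_const _).ennreal_ofReal)
      _ ≤ ENNReal.ofReal B * 1 := by gcongr
      _ = ENNReal.ofReal B := mul_one _
  have hSint : Integrable S μ := by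
    refine ⟨hSmeas.aestronglyMeasurable, ?_⟩
    rw [hasFiniteIntegral_iff_ofReal (Filter.Eventually.of_forall hSnn)]
    exact lt_of_le_of_lt hSlin ENNReal.ofReal_lt_top
  have hexpint : Integrable (fun ω => Real.exp (S ω / B)) μ := by
    refine ⟨((hSmeas.div_const _).exp).aestronglyMeasurable, ?_⟩
    rw [hasFiniteIntegral_iff_ofReal
      (Filter.Eventually.of_forall fun ω => le_of_lt (Real.exp_pos _))]
    exact lt_of_le_of_lt hfeas (by norm_num)
  have hXint : Integrable X μ := by
    refine Integrable.mono' (hSint.const_mul (arrayNorm A))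
      hXmeas.aestronglyMeasurable (Filter.Eventually.of_forall fun ω => ?_)
    rw [Real.norm_eq_abs]
    exact hXbound ω
  -- Jensen: E S / B ≤ log 2
  have hintSB : ∫ ω, S ω / B ∂μ ≤ Real.log 2 := by
    have hJ : Real.exp (∫ ω, S ω / B ∂μ) ≤ ∫ ω, Real.exp (S ω / B) ∂μ := by
      have := convexOn_exp.map_integral_le (f := fun ω => S ω / B) (μ := μ)
        Real.continuous_exp.continuousOn isClosed_univ
        (Filter.Eventually.of_forall fun _ => Set.mem_univ _) (hSint.div_const B) ?hgi
      · exact this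
      · exact hexpint
    have h2 : ∫ ω, Real.exp (S ω / B) ∂μ ≤ 2 := by
      rw [integral_eq_lintegral_of_nonneg_ae
        (Filter.Eventually.of_forall fun ω => le_of_lt (Real.exp_pos _))
        ((hSmeas.div_const _).exp).aestronglyMeasurable]
      calc (∫⁻ ω, ENNReal.ofReal (Real.exp (S ω / B)) ∂μ).toReal
          ≤ (2 : ℝ≥0∞).toReal := ENNReal.toReal_mono (by norm_num) hfeas
        _ = 2 := by norm_num
    have := Real.exp_le_exp.mpr (le_refl (∫ ω, S ω / B ∂μ))
    have hlog := Real.log_le_log (Real.exp_pos _) (le_trans hJ h2)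
    rwa [Real.log_exp] at hlog
  -- bound on the mean
  set c : ℝ := ∫ ω, X ω ∂μ with hcdef
  have hcbound : |c| ≤ M * Real.log 2 := by
    have h1 : |c| ≤ ∫ ω, |X ω| ∂μ := by
      rw [hcdef]
      calc |∫ ω, X ω ∂μ| = ‖∫ ω, X ω ∂μ‖ := (Real.norm_eq_abs _).symm
        _ ≤ ∫ ω, ‖X ω‖ ∂μ := norm_integral_le_integral_norm _
        _ = ∫ ω, |X ω| ∂μ := by simp [Real.norm_eq_abs]
    have h2 : ∫ ω, |X ω| ∂μ ≤ ∫ ω, arrayNorm A * S ω ∂μ :=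
      integral_mono hXint.abs (hSint.const_mul _) fun ω => hXbound ω
    have h3 : ∫ ω, arrayNorm A * S ω ∂μ = arrayNorm A * ∫ ω, S ω ∂μ := integral_const_mul _ _
    have h4 : ∫ ω, S ω ∂μ ≤ B * Real.log 2 := by
      have : ∫ ω, S ω / B ∂μ = (∫ ω, S ω ∂μ) / B := integral_div _ _
      rw [this, div_le_iff₀ hB] at hintSB
      linarith [hintSB]
    calc |c| ≤ ∫ ω, |X ω| ∂μ := h1
      _ ≤ arrayNorm A * ∫ ω, S ω ∂μ := by rw [← h3]; exact h2
      _ ≤ arrayNorm A * (B * Real.log 2) := by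
          have := mul_le_mul_of_nonneg_left h4 (le_of_lt hA)
          linarith
      _ = M * Real.log 2 := by rw [hMdef]; ring
  -- the centered variable
  set η : Ω → ℝ := fun ω => X ω - c with hηdef
  have hηmeas : Measurable η := hXmeas.sub measurable_const
  have hηint : Integrable η μ := hXint.sub (integrable_const c)
  have hηmean : ∫ ω, η ω ∂μ = 0 := by
    rw [hηdef]
    rw [integral_sub hXint (integrable_const c)]
    simp [hcdef, integral_const, measure_univ]
  -- psi1 bound
  have hψpt : ∀ ω, Real.exp (|η ω / (2 * M)|) ≤ 2⁻¹ * Real.exp (S ω / B) + 1 := by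
    intro ω
    have h2M : (0:ℝ) < 2 * M := by linarith
    have habs : |η ω / (2 * M)| = |η ω| / (2 * M) := by
      rw [abs_div, abs_of_pos h2M]
    have h1 : |η ω| ≤ arrayNorm A * S ω + M * Real.log 2 := by
      calc |η ω| ≤ |X ω| + |c| := abs_sub _ _
        _ ≤ arrayNorm A * S ω + M * Real.log 2 := add_le_add (hXbound ω) hcbound
    have h2 : |η ω| / (2 * M) ≤ 2⁻¹ * (S ω / B) + 2⁻¹ * Real.log 2 := by
      rw [div_le_iff₀ h2M]
      have hSB : arrayNorm A * S ω = M * (S ω / B) := by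
        rw [hMdef]; field_simp
      calc |η ω| ≤ arrayNorm A * S ω + M * Real.log 2 := h1
        _ = (2⁻¹ * (S ω / B) + 2⁻¹ * Real.log 2) * (2 * M) := by rw [hSB]; ring
    have h3 : Real.exp (2⁻¹ * (S ω / B) + 2⁻¹ * Real.log 2) ≤
        2⁻¹ * Real.exp (S ω / B) + 2⁻¹ * Real.exp (Real.log 2) :=
      convexOn_exp.2 (Set.mem_univ (S ω / B)) (Set.mem_univ (Real.log 2))
        (by norm_num) (by norm_num) (by norm_num)
    have h4 : Real.exp (Real.log 2) = 2 := Real.exp_log two_pos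
    calc Real.exp (|η ω / (2 * M)|) = Real.exp (|η ω| / (2 * M)) := by rw [habs]
      _ ≤ Real.exp (2⁻¹ * (S ω / B) + 2⁻¹ * Real.log 2) := Real.exp_le_exp.mpr h2
      _ ≤ 2⁻¹ * Real.exp (S ω / B) + 2⁻¹ * Real.exp (Real.log 2) := h3
      _ = 2⁻¹ * Real.exp (S ω / B) + 1 := by rw [h4]; norm_num
  have hψfeas : ∫⁻ ω, ENNReal.ofReal (Real.exp (|η ω / (2 * M)|)) ∂μ ≤ 2 := by
    have hpt : ∀ ω, ENNReal.ofReal (Real.exp (|η ω / (2 * M)|)) ≤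
        ENNReal.ofReal 2⁻¹ * ENNReal.ofReal (Real.exp (S ω / B)) + 1 := by
      intro ω
      refine le_trans (ENNReal.ofReal_le_ofReal (hψpt ω)) ?_
      rw [ENNReal.ofReal_add (by positivity) zero_le_one, ENNReal.ofReal_one,
        ENNReal.ofReal_mul (by norm_num)]
    calc ∫⁻ ω, ENNReal.ofReal (Real.exp (|η ω / (2 * M)|)) ∂μ
        ≤ ∫⁻ ω, (ENNReal.ofReal 2⁻¹ * ENNReal.ofReal (Real.exp (S ω / B)) + 1) ∂μ :=
          lintegral_mono hpt
      _ = ENNReal.ofReal 2⁻¹ * (∫⁻ ω, ENNReal.ofReal (Real.exp (S ω / B)) ∂μ) + 1 := by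
          rw [lintegral_add_right _ measurable_const, lintegral_one, measure_univ,
            lintegral_const_mul _ ((hSmeas.div_const _).exp).ennreal_ofReal]
      _ ≤ ENNReal.ofReal 2⁻¹ * 2 + 1 := by gcongr
      _ = 2 := by
          have h2 : ENNReal.ofReal 2⁻¹ * 2 = 1 := by
            rw [ENNReal.ofReal_inv_of_pos two_pos, ENNReal.ofReal_ofNat]
            exact ENNReal.inv_mul_cancel (by norm_num) (by norm_num)
          rw [h2]
          norm_num
  have hψle : psi1Norm μ η ≤ ENNReal.ofReal (2 * M) :=
    psi1Norm_le (by linarith) hψfeas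
  have hψfin : psi1Norm μ η < ⊤ := lt_of_le_of_lt hψle ENNReal.ofReal_lt_top
  have hσnn : 0 ≤ (psi1Norm μ η).toReal := ENNReal.toReal_nonneg
  have hσle : (psi1Norm μ η).toReal ≤ 2 * M := by
    calc (psi1Norm μ η).toReal ≤ (ENNReal.ofReal (2*M)).toReal :=
        ENNReal.toReal_mono ENNReal.ofReal_ne_top hψle
      _ = 2 * M := ENNReal.toReal_ofReal (by linarith)
  -- MGF bound with 2M in place of σ
  have hMGF2 : ∀ s : ℝ, C * (2 * M) * |s| ≤ 1 →
      ∫⁻ ω, ENNReal.ofReal (Real.exp (s * η ω)) ∂μ ≤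
        ENNReal.ofReal (Real.exp (C ^ 2 * (2 * M) ^ 2 * s ^ 2)) := by
    intro s hs
    have h1 : C * (psi1Norm μ η).toReal * |s| ≤ C * (2 * M) * |s| :=
      mul_le_mul_of_nonneg_right (mul_le_mul_of_nonneg_left hσle hC.le) (abs_nonneg s)
    refine le_trans (hMGF η hηmeas hηint hηmean hψfin s (h1.trans hs)) ?_
    apply ENNReal.ofReal_le_ofReal
    apply Real.exp_le_exp.mpr
    have hσ2 : (psi1Norm μ η).toReal ^ 2 ≤ (2*M) ^ 2 := pow_le_pow_left₀ hσnn hσle 2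
    have hs2 : (0:ℝ) ≤ s ^ 2 := sq_nonneg s
    have hC2 : (0:ℝ) ≤ C ^ 2 := sq_nonneg C
    exact mul_le_mul_of_nonneg_right (mul_le_mul_of_nonneg_left hσ2 hC2) hs2
  -- Chernoff
  have key : ∀ lam : ℝ, 0 ≤ lam → C * (2 * M) * lam ≤ 1 →
      μ {ω | t ≤ |η ω|} ≤
        ENNReal.ofReal (2 * Real.exp (C ^ 2 * (2 * M) ^ 2 * lam ^ 2 - lam * t)) := by
    intro lam hlam hcond
    set E : ℝ := C ^ 2 * (2 * M) ^ 2 * lam ^ 2 with hEdef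
    have e1 : ∫⁻ ω, ENNReal.ofReal (Real.exp (lam * η ω)) ∂μ ≤
        ENNReal.ofReal (Real.exp E) :=
      hMGF2 lam (by rwa [abs_of_nonneg hlam])
    have e2 : ∫⁻ ω, ENNReal.ofReal (Real.exp ((-lam) * η ω)) ∂μ ≤
        ENNReal.ofReal (Real.exp E) := by
      have := hMGF2 (-lam) (by rwa [abs_neg, abs_of_nonneg hlam])
      rwa [neg_sq, ← hEdef] at this
    have markov : ∀ f : Ω → ℝ, Measurable f →
        (∫⁻ ω, ENNReal.ofReal (Real.exp (f ω)) ∂μ ≤ ENNReal.ofReal (Real.exp E)) →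
        μ {ω | lam * t ≤ f ω} ≤ ENNReal.ofReal (Real.exp (E - lam * t)) := by
      intro f hf hint
      have h0 : ENNReal.ofReal (Real.exp (lam * t)) ≠ 0 := by
        simp [Real.exp_pos]
      have htop : ENNReal.ofReal (Real.exp (lam * t)) ≠ ⊤ := ENNReal.ofReal_ne_top
      have hsub : {ω | lam * t ≤ f ω} ⊆
          {ω | ENNReal.ofReal (Real.exp (lam * t)) ≤ ENNReal.ofReal (Real.exp (f ω))} := by
        intro ω hω
        exact ENNReal.ofReal_le_ofReal (Real.exp_le_exp.mpr hω)
      have hmk := mul_meas_ge_le_lintegral₀ (μ := μ)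
        (hf.exp.ennreal_ofReal).aemeasurable (ENNReal.ofReal (Real.exp (lam * t)))
      have h1 : ENNReal.ofReal (Real.exp (lam * t)) * μ {ω | lam * t ≤ f ω} ≤
          ENNReal.ofReal (Real.exp E) := by
        calc ENNReal.ofReal (Real.exp (lam * t)) * μ {ω | lam * t ≤ f ω}
            ≤ ENNReal.ofReal (Real.exp (lam * t)) *
              μ {ω | ENNReal.ofReal (Real.exp (lam * t)) ≤ ENNReal.ofReal (Real.exp (f ω))} :=
              mul_le_mul_right (measure_mono hsub) _
          _ ≤ ∫⁻ ω, ENNReal.ofReal (Real.exp (f ω)) ∂μ := hmk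
          _ ≤ ENNReal.ofReal (Real.exp E) := hint
      have h2 : μ {ω | lam * t ≤ f ω} ≤
          ENNReal.ofReal (Real.exp E) / ENNReal.ofReal (Real.exp (lam * t)) := by
        rw [ENNReal.le_div_iff_mul_le (Or.inl h0) (Or.inl htop), mul_comm]
        exact h1
      refine h2.trans (le_of_eq ?_)
      rw [← ENNReal.ofReal_div_of_pos (Real.exp_pos _), ← Real.exp_sub]
    have b1 : μ {ω | t ≤ η ω} ≤ ENNReal.ofReal (Real.exp (E - lam * t)) := by
      refine le_trans (measure_mono ?_) (markov (fun ω => lam * η ω)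
        (hηmeas.const_mul lam) e1)
      intro ω hω
      exact mul_le_mul_of_nonneg_left hω hlam
    have b2 : μ {ω | t ≤ -η ω} ≤ ENNReal.ofReal (Real.exp (E - lam * t)) := by
      refine le_trans (measure_mono ?_) (markov (fun ω => (-lam) * η ω)
        (hηmeas.const_mul (-lam)) e2)
      intro ω hω
      have : lam * t ≤ lam * (-η ω) := mul_le_mul_of_nonneg_left hω hlam
      simpa [mul_comm, neg_mul, mul_neg] using this
    have hsub : {ω | t ≤ |η ω|} ⊆ {ω | t ≤ η ω} ∪ {ω | t ≤ -η ω} := by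
      intro ω hω
      have hω' : t ≤ |η ω| := hω
      rcases le_abs.mp hω' with h | h
      · exact Set.mem_union_left _ h
      · exact Set.mem_union_right _ h
    calc μ {ω | t ≤ |η ω|} ≤ μ ({ω | t ≤ η ω} ∪ {ω | t ≤ -η ω}) := measure_mono hsub
      _ ≤ μ {ω | t ≤ η ω} + μ {ω | t ≤ -η ω} := measure_union_le _ _
      _ ≤ ENNReal.ofReal (Real.exp (E - lam * t)) + ENNReal.ofReal (Real.exp (E - lam * t)) :=
          add_le_add b1 b2
      _ = ENNReal.ofReal (2 * Real.exp (E - lam * t)) := by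
          rw [← ENNReal.ofReal_add (le_of_lt (Real.exp_pos _)) (le_of_lt (Real.exp_pos _))]
          norm_num [two_mul]
  -- finish by cases
  have hgoalset : {ω | t ≤ |chaos A (fun i => ξ i ω) - ∫ ω', chaos A (fun i => ξ i ω') ∂μ|} =
      {ω | t ≤ |η ω|} := rfl
  rw [hgoalset]
  have h4CM : 4 * C * arrayNorm A * τ ^ d = 4 * C * M := by rw [hMdef, hBdef]; ring
  rcases le_or_gt t (4 * C * arrayNorm A * τ ^ d) with hcase | hcase
  · rw [if_pos hcase]
    have hcaseM : t ≤ 4 * C * M := by rwa [h4CM] at hcase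
    set lam : ℝ := t / (8 * C ^ 2 * M ^ 2) with hlamdef
    have hlamnn : 0 ≤ lam := by positivity
    have hcond : C * (2 * M) * lam ≤ 1 := by
      rw [hlamdef]
      have heq : C * (2 * M) * (t / (8 * C ^ 2 * M ^ 2)) = t / (4 * C * M) := by
        field_simp; ring
      rw [heq, div_le_one (by positivity)]
      exact hcaseM
    refine le_trans (key lam hlamnn hcond) (le_of_eq ?_)
    congr 1
    congr 1
    rw [hlamdef]
    field_simp
    rw [hMdef]; ring
  · rw [if_neg (not_le.mpr hcase)]
    have hcaseM : 4 * C * M < t := by rwa [h4CM] at hcase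
    set lam : ℝ := 1 / (2 * C * M) with hlamdef
    have hlamnn : 0 ≤ lam := by positivity
    have hcond : C * (2 * M) * lam ≤ 1 := by
      rw [hlamdef]
      rw [mul_one_div]
      rw [div_le_one (by positivity)]
      ring_nf
      exact le_refl _
    refine le_trans (key lam hlamnn hcond) (le_of_eq ?_)
    congr 1
    congr 1
    rw [hlamdef]
    have h2CM : 2 * C * arrayNorm A * τ ^ d = 2 * C * M := by rw [hMdef, hBdef]; ring
    rw [h2CM]
    field_simp
    ring
end

end AuxLemmas

set_option maxHeartbeats 1000000 in
/-- Let `d ≥ 2`, `d′ = d/(d-1)`, `A` a `d`-fold array, `ξ` a random vector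
with `‖ξ‖_{E_d} < ∞`, and `C > 0` a constant such that every centered random variable `η`
with finite ψ_1-norm satisfies `E exp(tη) ≤ exp(C²‖η‖_{ψ_1}²t²)` for `|t| ≤ 1/(C‖η‖_{ψ_1})`.
Then for every `t ≥ 0`, `P(|S_d(ξ) - E S_d(ξ)| ≥ t) ≤ 2 e^{-g(t)}`, with
`g(t) = t²/(16C²‖A‖_{d′}²‖ξ‖_{E_d}^{2d})` for `0 ≤ t ≤ 4C‖A‖_{d′}‖ξ‖_{E_d}^d` and
`g(t) = t/(2C‖A‖_{d′}‖ξ‖_{E_d}^d) - 1` for larger `t`. -/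
theorem chaos_tail_bound {Ω : Type u} [MeasurableSpace Ω] (μ : Measure Ω)
    [IsProbabilityMeasure μ] (d n : ℕ) (hd : 2 ≤ d)
    (A : (Fin d → Fin n) → ℝ) (ξ : Fin n → Ω → ℝ) (hmeas : ∀ i, Measurable (ξ i))
    (hfin : epNorm μ (d : ℝ) ξ < ⊤)
    (C : ℝ) (hC : 0 < C)
    (hCprop : ∀ (Ω' : Type u) [MeasurableSpace Ω'] (μ' : Measure Ω')
      [IsProbabilityMeasure μ'] (η : Ω' → ℝ), Measurable η → Integrable η μ' →
      (∫ ω, η ω ∂μ') = 0 → psi1Norm μ' η < ⊤ →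
      ∀ t : ℝ, C * (psi1Norm μ' η).toReal * |t| ≤ 1 →
        ∫⁻ ω, ENNReal.ofReal (Real.exp (t * η ω)) ∂μ' ≤
          ENNReal.ofReal (Real.exp (C ^ 2 * (psi1Norm μ' η).toReal ^ 2 * t ^ 2)))
    (t : ℝ) (ht : 0 ≤ t) :
    μ {ω | t ≤ |chaos A (fun i => ξ i ω) - ∫ ω', chaos A (fun i => ξ i ω') ∂μ|} ≤
      ENNReal.ofReal (2 * Real.exp
        (-(if t ≤ 4 * C * arrayNorm A * (epNorm μ (d : ℝ) ξ).toReal ^ d then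
            t ^ 2 / (16 * C ^ 2 * arrayNorm A ^ 2 * ((epNorm μ (d : ℝ) ξ).toReal ^ d) ^ 2)
          else
            t / (2 * C * arrayNorm A * (epNorm μ (d : ℝ) ξ).toReal ^ d) - 1))) := by
  set τ : ℝ := (epNorm μ (d : ℝ) ξ).toReal with hτdef
  have hτnn : 0 ≤ τ := ENNReal.toReal_nonneg
  -- the trivial case where the chaos vanishes a.e.
  have trivial_case : (∀ᵐ ω ∂μ, chaos A (fun i => ξ i ω) = 0) →
      μ {ω | t ≤ |chaos A (fun i => ξ i ω) - ∫ ω', chaos A (fun i => ξ i ω') ∂μ|} ≤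
      ENNReal.ofReal (2 * Real.exp
        (-(if t ≤ 4 * C * arrayNorm A * τ ^ d then
            t ^ 2 / (16 * C ^ 2 * arrayNorm A ^ 2 * (τ ^ d) ^ 2)
          else
            t / (2 * C * arrayNorm A * τ ^ d) - 1))) := by
    intro h0
    have hEzero : (∫ ω', chaos A (fun i => ξ i ω') ∂μ) = 0 := integral_eq_zero_of_ae h0
    rcases ht.eq_or_lt with heq | htpos
    · -- t = 0
      rw [← heq]
      rw [if_pos (mul_nonneg (mul_nonneg (mul_nonneg (by norm_num) hC.le)
        (arrayNorm_nonneg A)) (pow_nonneg hτnn d))]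
      have : (0:ℝ) ^ 2 / (16 * C ^ 2 * arrayNorm A ^ 2 * (τ ^ d) ^ 2) = 0 := by
        rw [zero_pow (by norm_num : 2 ≠ 0), zero_div]
      rw [this, neg_zero, Real.exp_zero, mul_one]
      calc μ _ ≤ μ Set.univ := measure_mono (Set.subset_univ _)
        _ = 1 := measure_univ
        _ ≤ ENNReal.ofReal 2 := ENNReal.one_le_ofReal.mpr one_le_two
    · -- t > 0
      have hnull : μ {ω | t ≤ |chaos A (fun i => ξ i ω) -
          ∫ ω', chaos A (fun i => ξ i ω') ∂μ|} = 0 := by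
        apply measure_eq_zero_iff_ae_notMem.mpr
        filter_upwards [h0] with ω hω
        simp only [Set.mem_setOf_eq, hω, hEzero, sub_zero, abs_zero, not_le]
        exact htpos
      rw [hnull]
      exact zero_le
  by_cases hA0 : arrayNorm A = 0
  · -- A = 0
    have hd1 : ((d:ℝ) - 1) / (d:ℝ) ≠ 0 := by
      have h2 : (2:ℝ) ≤ (d:ℝ) := by exact_mod_cast hd
      have : (0:ℝ) < ((d:ℝ) - 1) / (d:ℝ) := by
        apply div_pos <;> linarith
      exact ne_of_gt this
    have hd'0 : (d:ℝ) / ((d:ℝ) - 1) ≠ 0 := by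
      have h2 : (2:ℝ) ≤ (d:ℝ) := by exact_mod_cast hd
      have : (0:ℝ) < (d:ℝ) / ((d:ℝ) - 1) := by
        apply div_pos <;> linarith
      exact ne_of_gt this
    have hsum : ∑ i : Fin d → Fin n, |A i| ^ ((d:ℝ)/((d:ℝ)-1)) = 0 := by
      have := (Real.rpow_eq_zero (Finset.sum_nonneg fun i _ =>
        Real.rpow_nonneg (abs_nonneg _) _) hd1).mp hA0
      exact this
    have hAzero : ∀ i, A i = 0 := by
      intro i
      have hterm := (Finset.sum_eq_zero_iff_of_nonneg
        (fun j _ => Real.rpow_nonneg (abs_nonneg _) _)).mp hsum i (Finset.mem_univ i)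
      have := (Real.rpow_eq_zero (abs_nonneg _) hd'0).mp hterm
      exact abs_eq_zero.mp this
    refine trivial_case (Filter.Eventually.of_forall fun ω => ?_)
    unfold chaos
    exact Finset.sum_eq_zero fun i _ => by rw [hAzero i, zero_mul]
  · by_cases hτ0 : τ = 0
    · -- epNorm = 0
      have hν0 : epNorm μ (d:ℝ) ξ = 0 := by
        rcases (ENNReal.toReal_eq_zero_iff _).mp hτ0 with h | h
        · exact h
        · exact absurd h hfin.ne
      have hae := epNorm_eq_zero_ae hmeas (by exact_mod_cast Nat.one_le_of_lt hd) hν0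
      refine trivial_case ?_
      filter_upwards [hae] with ω hω
      unfold chaos
      refine Finset.sum_eq_zero fun i _ => ?_
      have hzero : ∏ k, ξ (i k) ω = 0 := by
        apply Finset.prod_eq_zero (Finset.mem_univ (⟨0, by omega⟩ : Fin d))
        exact hω _
      rw [hzero, mul_zero]
    · have hτpos : 0 < τ := lt_of_le_of_ne hτnn (Ne.symm hτ0)
      have hτeq : epNorm μ (d:ℝ) ξ = ENNReal.ofReal τ :=
        (ENNReal.ofReal_toReal hfin.ne).symm
      have hApos : 0 < arrayNorm A := lt_of_le_of_ne (arrayNorm_nonneg A) (Ne.symm hA0)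
      exact main_bound hd hmeas hτpos hτeq hApos hC
        (fun η hm hi h0 hf => hCprop Ω μ η hm hi h0 hf) t ht
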